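/- arXiv:2109.15030 — 2 statements merged into one kernel-verified Lean document; each statement's English description precedes it below -/
import Mathlib

section
/- Let (f^t, g^t, y^t, λ^t) be the iterates of PAME with θ ∈ (0,1) and τ := η/(2c_∞²). Then for every t ≥ 0, E(f^{t+1}, g^{t+1}, λ^{t+1}, λ^t) − E(f^{t+1}, g^{t+1}, λ^t, λ^{t−1}) ≥ ((2θ − θ²)/(2τ))‖λ^t − λ^{t−1}‖_2² + (1/(4τ))‖λ^{t+1} − y^{t+1}‖_2², and in particular the right-hand side is nonnegative. -/
open scoped BigOperators

noncomputable section

namespace EOT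

/-- Square matrices as functions. -/
abbrev Mat (n : ℕ) := Fin n → Fin n → ℝ

/-- Frobenius inner product ⟨A, B⟩ = Σ_{i,j} A_{ij} B_{ij}. -/
def frob {n : ℕ} (A B : Mat n) : ℝ := ∑ i, ∑ j, A i j * B i j

/-- Row-sum vector r(A) = A 𝟙. -/
def rowSum {n : ℕ} (A : Mat n) : Fin n → ℝ := fun i => ∑ j, A i j

/-- Column-sum vector c(A) = Aᵀ 𝟙. -/
def colSum {n : ℕ} (A : Mat n) : Fin n → ℝ := fun j => ∑ i, A i j

/-- Entrywise ℓ₁ norm of a matrix. -/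
def mnorm1 {n : ℕ} (A : Mat n) : ℝ := ∑ i, ∑ j, |A i j|

/-- ℓ₁ norm of a vector. -/
def vnorm1 {m : ℕ} (v : Fin m → ℝ) : ℝ := ∑ i, |v i|

/-- Euclidean (ℓ₂) norm of a vector. -/
def vnorm2 {m : ℕ} (v : Fin m → ℝ) : ℝ := Real.sqrt (∑ i, v i ^ 2)

/-- c_∞ := max_{k,i,j} |C^k_{ij}|. -/
def cinf {n N : ℕ} (C : Fin N → Mat n) : ℝ := ⨆ k, ⨆ i, ⨆ j, |C k i j|

/-- ι := min_j log b_j. -/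
def iotaMin {n : ℕ} (b : Fin n → ℝ) : ℝ := ⨅ j, Real.log (b j)

/-- ζ^k(f,g,λ)_{ij} = exp((f_i + g_j − λ_k C^k_{ij})/η). -/
def zeta {n N : ℕ} (η : ℝ) (C : Fin N → Mat n) (f g : Fin n → ℝ)
    (lam : Fin N → ℝ) (k : Fin N) : Mat n :=
  fun i j => Real.exp ((f i + g j - lam k * C k i j) / η)

/-- π^k(f,g,λ) = ζ^k(f,g,λ) / Σ_{k'} ‖ζ^{k'}(f,g,λ)‖₁. -/
def piMat {n N : ℕ} (η : ℝ) (C : Fin N → Mat n) (f g : Fin n → ℝ)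
    (lam : Fin N → ℝ) (k : Fin N) : Mat n :=
  fun i j => zeta η C f g lam k i j / ∑ k', mnorm1 (zeta η C f g lam k')

/-- The dual objective F(f,g,λ) = ⟨f,a⟩ + ⟨g,b⟩ − η log(Σ_k ‖ζ^k‖₁) − η. -/
def Fdual {n N : ℕ} (η : ℝ) (C : Fin N → Mat n) (a b : Fin n → ℝ)
    (f g : Fin n → ℝ) (lam : Fin N → ℝ) : ℝ :=
  (∑ i, f i * a i) + (∑ j, g j * b j)
    - η * Real.log (∑ k, mnorm1 (zeta η C f g lam k)) - η

/-- Gradient of F with respect to λ: (∇_λ F)_k = ⟨π^k(f,g,λ), C^k⟩. -/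
def gradLam {n N : ℕ} (η : ℝ) (C : Fin N → Mat n) (f g : Fin n → ℝ)
    (lam : Fin N → ℝ) : Fin N → ℝ :=
  fun k => frob (piMat η C f g lam k) (C k)

/-- `p` is the Euclidean projection of `x` onto the probability simplex. -/
def IsProjSimplex {m : ℕ} (p x : Fin m → ℝ) : Prop :=
  p ∈ stdSimplex ℝ (Fin m) ∧
    ∀ q ∈ stdSimplex ℝ (Fin m),
      vnorm2 (fun k => p k - x k) ≤ vnorm2 (fun k => q k - x k)

/-- Kullback–Leibler divergence KL(v‖w) = Σ_j v_j log(v_j / w_j). -/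
def klVec {m : ℕ} (v w : Fin m → ℝ) : ℝ := ∑ j, v j * Real.log (v j / w j)

/-- The Hamiltonian E(f,g,λ¹,λ²) = F(f,g,λ¹) − (1/(2τ))‖λ¹ − λ²‖₂². -/
def ham {n N : ℕ} (η : ℝ) (C : Fin N → Mat n) (a b : Fin n → ℝ) (τ : ℝ)
    (f g : Fin n → ℝ) (l1 l2 : Fin N → ℝ) : ℝ :=
  Fdual η C a b f g l1 - 1 / (2 * τ) * vnorm2 (fun k => l1 k - l2 k) ^ 2

/-- The rounding procedure Round(A, a, b). -/
def roundMat {n : ℕ} (A : Mat n) (a b : Fin n → ℝ) : Mat n :=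
  let x : Fin n → ℝ := fun i => min (a i / rowSum A i) 1
  let A' : Mat n := fun i j => x i * A i j
  let y : Fin n → ℝ := fun j => min (b j / colSum A' j) 1
  let A'' : Mat n := fun i j => A' i j * y j
  let erra : Fin n → ℝ := fun i => a i - rowSum A'' i
  let errb : Fin n → ℝ := fun j => b j - colSum A'' j
  fun i j => A'' i j + if vnorm1 erra = 0 then 0 else erra i * errb j / vnorm1 erra

/-- The coupling decomposition set Π_{a,b}^N. -/
def coupling {n N : ℕ} (a b : Fin n → ℝ) : Set (Fin N → Mat n) :=
  {P | (∀ k i j, 0 ≤ P k i j) ∧ rowSum (∑ k, P k) = a ∧ colSum (∑ k, P k) = b}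

/-- ℓ(π, λ) = Σ_k λ_k ⟨π^k, C^k⟩. -/
def ell {n N : ℕ} (C : Fin N → Mat n) (P : Fin N → Mat n) (lam : Fin N → ℝ) : ℝ :=
  ∑ k, lam k * frob (P k) (C k)

/-- (P, λ) is an ε-optimal solution of the EOT problem (duality-gap ≤ ε). -/
def epsOptimal {n N : ℕ} (C : Fin N → Mat n) (a b : Fin n → ℝ)
    (P : Fin N → Mat n) (lam : Fin N → ℝ) (ε : ℝ) : Prop :=
  P ∈ coupling (N := N) a b ∧ lam ∈ stdSimplex ℝ (Fin N) ∧
    ∀ μ ∈ stdSimplex ℝ (Fin N), ∀ Q ∈ coupling (N := N) a b,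
      ell C P μ - ell C Q lam ≤ ε

/-- The defining properties of the Margins procedure output (a^k, b^k). -/
def MarginsProp {n N : ℕ} (P : Fin N → Mat n) (b : Fin n → ℝ)
    (ak bk : Fin N → Fin n → ℝ) : Prop :=
  (∀ k, ak k = rowSum (P k)) ∧
  (∀ k j, 0 ≤ bk k j) ∧
  (∀ j, ∑ k, bk k j = b j) ∧
  (∀ k, ∑ j, bk k j = ∑ i, ak k i) ∧
  (∀ j k k', 0 ≤ (bk k j - colSum (P k) j) * (bk k' j - colSum (P k') j))


lemma vnorm2_sq {m : ℕ} (v : Fin m → ℝ) : vnorm2 v ^ 2 = ∑ i, v i ^ 2 :=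
  Real.sq_sqrt (Finset.sum_nonneg fun i _ => sq_nonneg _)

lemma vnorm2_nonneg {m : ℕ} (v : Fin m → ℝ) : 0 ≤ vnorm2 v := Real.sqrt_nonneg _

lemma proj_vi {m : ℕ} {p x : Fin m → ℝ} (h : IsProjSimplex p x)
    {q : Fin m → ℝ} (hq : q ∈ stdSimplex ℝ (Fin m)) :
    ∑ k, (x k - p k) * (q k - p k) ≤ 0 := by
  set D : ℝ := ∑ k, (p k - x k) * (q k - p k) with hD
  set Q : ℝ := ∑ k, (q k - p k) ^ 2 with hQ
  have hQ0 : 0 ≤ Q := Finset.sum_nonneg fun i _ => sq_nonneg _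
  have key : ∀ θ : ℝ, 0 ≤ θ → θ ≤ 1 → 0 ≤ 2 * θ * D + θ ^ 2 * Q := by
    intro θ hθ0 hθ1
    have hz : (fun k => p k + θ * (q k - p k)) ∈ stdSimplex ℝ (Fin m) := by
      have := (convex_stdSimplex ℝ (Fin m)) h.1 hq (a := 1 - θ) (b := θ)
        (by linarith) hθ0 (by ring)
      convert this using 1
      funext k
      simp [smul_eq_mul]
      ring
    have h2 := h.2 _ hz
    have h3 : vnorm2 (fun k => p k - x k) ^ 2 ≤
        vnorm2 (fun k => (p k + θ * (q k - p k)) - x k) ^ 2 := by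
      have := vnorm2_nonneg (fun k => p k - x k)
      nlinarith [h2]
    rw [vnorm2_sq, vnorm2_sq] at h3
    have expand : ∑ k, ((p k + θ * (q k - p k)) - x k) ^ 2
        = (∑ k, (p k - x k) ^ 2) + 2 * θ * D + θ ^ 2 * Q := by
      rw [hD, hQ, Finset.mul_sum, Finset.mul_sum, ← Finset.sum_add_distrib,
        ← Finset.sum_add_distrib]
      apply Finset.sum_congr rfl
      intro k _
      ring
    rw [expand] at h3
    linarith
  have hD0 : 0 ≤ D := by
    by_contra hneg
    push_neg at hneg
    rcases eq_or_lt_of_le hQ0 with hQz | hQpos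
    · have := key 1 zero_le_one le_rfl
      nlinarith
    · set θ := min 1 (-D / Q) with hθ
      have hθpos : 0 < θ := lt_min one_pos (div_pos (by linarith) hQpos)
      have hθ1 : θ ≤ 1 := min_le_left _ _
      have hθQ : θ * Q ≤ -D := by
        have : θ ≤ -D / Q := min_le_right _ _
        calc θ * Q ≤ (-D / Q) * Q := by nlinarith
          _ = -D := by field_simp
      have := key θ hθpos.le hθ1
      nlinarith
  have : ∑ k, (x k - p k) * (q k - p k) = -D := by
    rw [hD, ← Finset.sum_neg_distrib]
    apply Finset.sum_congr rfl
    intro k _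
    ring
  linarith [this ▸ neg_nonpos_of_nonneg hD0]


lemma lse_core {ι : Type*} [Fintype ι] (p s : ι → ℝ)
    (hp : ∀ a, 0 < p a) (hp1 : ∑ a, p a = 1) {M : ℝ} (hs : ∀ a, |s a| ≤ M) :
    (∑ a, p a * s a ≤ Real.log (∑ a, p a * Real.exp (s a))) ∧
    Real.log (∑ a, p a * Real.exp (s a)) ≤ (∑ a, p a * s a) + M ^ 2 / 2 := by
  have hne : (Finset.univ : Finset ι).Nonempty := by
    rcases (Finset.univ (α := ι)).eq_empty_or_nonempty with he | hne
    · rw [he, Finset.sum_empty] at hp1; norm_num at hp1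
    · exact hne
  set S0 : ℝ → ℝ := fun u => ∑ a, p a * Real.exp (u * s a) with hS0
  set S1 : ℝ → ℝ := fun u => ∑ a, p a * s a * Real.exp (u * s a) with hS1
  set S2 : ℝ → ℝ := fun u => ∑ a, p a * s a ^ 2 * Real.exp (u * s a) with hS2
  have hS0pos : ∀ u, 0 < S0 u := fun u =>
    Finset.sum_pos (fun a _ => mul_pos (hp a) (Real.exp_pos _)) hne
  have hd0 : ∀ u, HasDerivAt S0 (S1 u) u := by
    intro u
    apply HasDerivAt.fun_sum
    intro a _
    have h1 : HasDerivAt (fun u : ℝ => Real.exp (u * s a)) (s a * Real.exp (u * s a)) u := by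
      have := ((hasDerivAt_id u).mul_const (s a)).exp
      simpa [mul_comm] using this
    have := h1.const_mul (p a)
    exact this.congr_deriv (by ring)
  have hd1 : ∀ u, HasDerivAt S1 (S2 u) u := by
    intro u
    apply HasDerivAt.fun_sum
    intro a _
    have h1 : HasDerivAt (fun u : ℝ => Real.exp (u * s a)) (s a * Real.exp (u * s a)) u := by
      have := ((hasDerivAt_id u).mul_const (s a)).exp
      simpa [mul_comm] using this
    have := h1.const_mul (p a * s a)
    exact this.congr_deriv (by ring)
  have hS00 : S0 0 = 1 := by simp [hS0, hp1]
  have hS10 : S1 0 = ∑ a, p a * s a := by simp [hS1]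
  -- Jensen (concavity part)
  have jensen : ∑ a, p a * s a ≤ Real.log (∑ a, p a * Real.exp (s a)) := by
    have h1 : Real.exp (∑ a, p a * s a) ≤ ∑ a, p a * Real.exp (s a) := by
      have := convexOn_exp.map_sum_le (t := Finset.univ) (w := p) (p := s)
        (fun a _ => (hp a).le) hp1 (fun a _ => Set.mem_univ _)
      simpa [smul_eq_mul] using this
    have h2 : (0:ℝ) < ∑ a, p a * Real.exp (s a) :=
      Finset.sum_pos (fun a _ => mul_pos (hp a) (Real.exp_pos _)) hne
    calc ∑ a, p a * s a = Real.log (Real.exp (∑ a, p a * s a)) := (Real.log_exp _).symm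
      _ ≤ Real.log (∑ a, p a * Real.exp (s a)) := Real.log_le_log (Real.exp_pos _) h1
  refine ⟨jensen, ?_⟩
  obtain ⟨a0, -⟩ := hne
  have hM0 : 0 ≤ M := le_trans (abs_nonneg _) (hs a0)
  -- smoothness part via 1D calculus
  set h : ℝ → ℝ := fun u => Real.log (S0 u) with hh
  set E : ℝ := ∑ a, p a * s a with hE
  set φ : ℝ → ℝ := fun u => E * u + M ^ 2 * u ^ 2 / 2 - h u with hφ
  set φ' : ℝ → ℝ := fun u => E + M ^ 2 * u - S1 u / S0 u with hφ'
  have hdh : ∀ u, HasDerivAt h (S1 u / S0 u) u := fun u => (hd0 u).log (hS0pos u).ne'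
  have hdφ : ∀ u, HasDerivAt φ (φ' u) u := by
    intro u
    have h1 : HasDerivAt (fun u : ℝ => E * u + M ^ 2 * u ^ 2 / 2)
        (E + M ^ 2 * u) u := by
      have ha : HasDerivAt (fun u : ℝ => E * u) E u := by
        simpa using (hasDerivAt_id u).const_mul E
      have hb : HasDerivAt (fun u : ℝ => M ^ 2 * u ^ 2 / 2) (M ^ 2 * u) u := by
        have := ((hasDerivAt_pow 2 u).const_mul (M ^ 2)).div_const 2
        exact this.congr_deriv (by rw [show (2:ℕ) - 1 = 1 from rfl]; push_cast; ring)
      simpa using ha.fun_add hb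
    exact h1.sub (hdh u)
  have hdφ' : ∀ u, HasDerivAt φ' (M ^ 2 - (S2 u * S0 u - S1 u * S1 u) / (S0 u) ^ 2) u := by
    intro u
    have h1 : HasDerivAt (fun u : ℝ => E + M ^ 2 * u) (M ^ 2) u := by
      simpa using (hasDerivAt_const u E).fun_add ((hasDerivAt_id u).const_mul (M ^ 2))
    exact h1.sub ((hd1 u).div (hd0 u) (hS0pos u).ne')
  have hsecond : ∀ u, 0 ≤ M ^ 2 - (S2 u * S0 u - S1 u * S1 u) / (S0 u) ^ 2 := by
    intro u
    have hS2le : S2 u ≤ M ^ 2 * S0 u := by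
      rw [hS2, hS0, Finset.mul_sum]
      apply Finset.sum_le_sum
      intro a _
      have hsq : s a ^ 2 ≤ M ^ 2 := sq_le_sq' (neg_le_of_abs_le (hs a)) (le_of_abs_le (hs a))
      calc p a * s a ^ 2 * Real.exp (u * s a)
          = s a ^ 2 * (p a * Real.exp (u * s a)) := by ring
        _ ≤ M ^ 2 * (p a * Real.exp (u * s a)) :=
            mul_le_mul_of_nonneg_right hsq (mul_pos (hp a) (Real.exp_pos _)).le
    have hq : (S2 u * S0 u - S1 u * S1 u) / (S0 u) ^ 2 ≤ M ^ 2 := by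
      rw [div_le_iff₀ (pow_pos (hS0pos u) 2)]
      nlinarith [hS0pos u, sq_nonneg (S1 u)]
    linarith
  -- φ' is monotone, φ'(0) = 0, so φ' ≥ 0 on [0,∞), so φ monotone there, φ(1) ≥ φ(0)
  have hφ'0 : φ' 0 = 0 := by simp [hφ', hS00, hS10, hE]
  have hmono' : Monotone φ' := by
    apply monotone_of_deriv_nonneg
    · exact fun u => (hdφ' u).differentiableAt
    · intro u
      rw [(hdφ' u).deriv]
      exact hsecond u
  have hφ'nonneg : ∀ u, 0 ≤ u → 0 ≤ φ' u := fun u hu => hφ'0 ▸ hmono' hu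
  have hmonoφ : MonotoneOn φ (Set.Ici 0) := by
    apply monotoneOn_of_deriv_nonneg (convex_Ici 0)
    · exact (fun u _ => ((hdφ u).differentiableAt).continuousAt.continuousWithinAt)
    · exact fun u hu => ((hdφ u).differentiableAt).differentiableWithinAt
    · intro u hu
      rw [(hdφ u).deriv]
      exact hφ'nonneg u (le_of_lt (by simpa using hu))
  have hφ0 : φ 0 = 0 := by simp [hφ, hh, hS00]
  have hfinal := hmonoφ (Set.self_mem_Ici) (Set.mem_Ici.mpr zero_le_one) zero_le_one
  rw [hφ0] at hfinal
  have hS01 : S0 1 = ∑ a, p a * Real.exp (s a) := by simp [hS0]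
  have h1le : h 1 ≤ E + M ^ 2 / 2 := by
    simp only [hφ] at hfinal
    nlinarith
  have h2le : Real.log (S0 1) ≤ E + M ^ 2 / 2 := h1le
  rw [hS01] at h2le
  simpa [hE] using h2le


lemma abs_le_cinf {n N : ℕ} (C : Fin N → Mat n) (k : Fin N) (i j : Fin n) :
    |C k i j| ≤ cinf C := by
  have h1 : |C k i j| ≤ ⨆ j', |C k i j'| :=
    le_ciSup (f := fun j' => |C k i j'|) (Set.Finite.bddAbove (Set.finite_range _)) j
  have h2 : (⨆ j', |C k i j'|) ≤ ⨆ i', ⨆ j', |C k i' j'| :=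
    le_ciSup (f := fun i' => ⨆ j', |C k i' j'|) (Set.Finite.bddAbove (Set.finite_range _)) i
  have h3 : (⨆ i', ⨆ j', |C k i' j'|) ≤ cinf C :=
    le_ciSup (f := fun k' => ⨆ i', ⨆ j', |C k' i' j'|) (Set.Finite.bddAbove (Set.finite_range _)) k
  linarith


lemma fdual_bounds {n N : ℕ} (hn : 0 < n) (hN : 0 < N)
    (C : Fin N → Mat n) (a b : Fin n → ℝ) {η : ℝ} (hη : 0 < η)
    (f g : Fin n → ℝ) (μ lam' : Fin N → ℝ) :
    Fdual η C a b f g lam' ≤ Fdual η C a b f g μ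
        + ∑ k, gradLam η C f g μ k * (lam' k - μ k) ∧
    Fdual η C a b f g μ + (∑ k, gradLam η C f g μ k * (lam' k - μ k))
        - cinf C ^ 2 / (2 * η) * ∑ k, (lam' k - μ k) ^ 2 ≤ Fdual η C a b f g lam' := by
  haveI : NeZero n := ⟨hn.ne'⟩
  haveI : NeZero N := ⟨hN.ne'⟩
  set S : (Fin N → ℝ) → ℝ := fun lam => ∑ k, mnorm1 (zeta η C f g lam k) with hS
  have hSexp : ∀ lam, S lam = ∑ k, ∑ i, ∑ j, zeta η C f g lam k i j := by
    intro lam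
    simp only [hS, mnorm1]
    refine Finset.sum_congr rfl fun k _ => Finset.sum_congr rfl fun i _ =>
      Finset.sum_congr rfl fun j _ => abs_of_pos (Real.exp_pos _)
  have hSpos : ∀ lam, 0 < S lam := by
    intro lam
    rw [hSexp]
    exact Finset.sum_pos (fun k _ => Finset.sum_pos (fun i _ => Finset.sum_pos
      (fun j _ => Real.exp_pos _) Finset.univ_nonempty) Finset.univ_nonempty)
      Finset.univ_nonempty
  set p : Fin N × Fin n × Fin n → ℝ :=
    fun x => zeta η C f g μ x.1 x.2.1 x.2.2 / S μ with hpdef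
  set s : Fin N × Fin n × Fin n → ℝ :=
    fun x => (μ x.1 - lam' x.1) * C x.1 x.2.1 x.2.2 / η with hsdef
  have hp : ∀ x, 0 < p x := fun x => div_pos (Real.exp_pos _) (hSpos μ)
  have hp1 : ∑ x, p x = 1 := by
    rw [hpdef]
    rw [← Finset.sum_div]
    rw [Fintype.sum_prod_type]
    have : ∑ k, ∑ y : Fin n × Fin n, zeta η C f g μ k y.1 y.2 =
        ∑ k, ∑ i, ∑ j, zeta η C f g μ k i j := by
      refine Finset.sum_congr rfl fun k _ => ?_
      rw [Fintype.sum_prod_type]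
    rw [this, ← hSexp]
    exact div_self (hSpos μ).ne'
  -- zeta change of variable
  have hzeta : ∀ k i j, zeta η C f g lam' k i j =
      zeta η C f g μ k i j * Real.exp ((μ k - lam' k) * C k i j / η) := by
    intro k i j
    rw [zeta, zeta, ← Real.exp_add]
    congr 1
    field_simp
    ring
  -- S lam' / S μ = ∑ p e^s
  have hratio : ∑ x, p x * Real.exp (s x) = S lam' / S μ := by
    rw [hpdef, hsdef]
    have : ∀ x : Fin N × Fin n × Fin n,
        zeta η C f g μ x.1 x.2.1 x.2.2 / S μ *
          Real.exp ((μ x.1 - lam' x.1) * C x.1 x.2.1 x.2.2 / η)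
        = zeta η C f g lam' x.1 x.2.1 x.2.2 / S μ := by
      intro x
      rw [hzeta x.1 x.2.1 x.2.2]
      ring
    simp only [this]
    rw [← Finset.sum_div]
    congr 1
    rw [hSexp, Fintype.sum_prod_type]
    refine Finset.sum_congr rfl fun k _ => ?_
    rw [Fintype.sum_prod_type]
  -- s bound
  set M : ℝ := cinf C * Real.sqrt (∑ k, (lam' k - μ k) ^ 2) / η with hMdef
  have hcinf0 : 0 ≤ cinf C := le_trans (abs_nonneg _)
    (abs_le_cinf C ⟨0, hN⟩ ⟨0, hn⟩ ⟨0, hn⟩)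
  have hs : ∀ x, |s x| ≤ M := by
    intro ⟨k, i, j⟩
    rw [hsdef, hMdef]
    rw [abs_div, abs_mul, abs_of_pos hη]
    have hnum : |μ k - lam' k| * |C k i j| ≤
        cinf C * Real.sqrt (∑ k', (lam' k' - μ k') ^ 2) := ?_
    · have := mul_le_mul_of_nonneg_right hnum (inv_nonneg.mpr hη.le)
      simpa [div_eq_mul_inv] using this
    have h1 : |μ k - lam' k| ≤ Real.sqrt (∑ k', (lam' k' - μ k') ^ 2) := by
      rw [← Real.sqrt_sq_eq_abs]
      apply Real.sqrt_le_sqrt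
      calc (μ k - lam' k) ^ 2 = (lam' k - μ k) ^ 2 := by ring
        _ ≤ ∑ k', (lam' k' - μ k') ^ 2 :=
          Finset.single_le_sum (f := fun k' => (lam' k' - μ k') ^ 2)
            (fun k' _ => sq_nonneg _) (Finset.mem_univ k)
    calc |μ k - lam' k| * |C k i j| ≤ Real.sqrt (∑ k', (lam' k' - μ k') ^ 2) * cinf C :=
        mul_le_mul h1 (abs_le_cinf C k i j) (abs_nonneg _) (Real.sqrt_nonneg _)
      _ = cinf C * Real.sqrt (∑ k', (lam' k' - μ k') ^ 2) := by ring
  -- gradient identity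
  have hSnorm : ∀ lam, (∑ k', mnorm1 (zeta η C f g lam k')) = S lam := fun _ => rfl
  have hgradk : ∀ k, gradLam η C f g μ k * (lam' k - μ k)
      = -η * ∑ y : Fin n × Fin n, p (k, y) * s (k, y) := by
    intro k
    have hg : gradLam η C f g μ k = ∑ y : Fin n × Fin n, p (k, y) * C k y.1 y.2 := by
      rw [Fintype.sum_prod_type]
      simp only [gradLam, frob, piMat, hpdef, hSnorm]
    rw [hg, Finset.sum_mul, Finset.mul_sum]
    refine Finset.sum_congr rfl fun y _ => ?_
    have hc : -η * ((μ k - lam' k) * C k y.1 y.2 / η) = C k y.1 y.2 * (lam' k - μ k) := by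
      field_simp
      ring
    calc p (k, y) * C k y.1 y.2 * (lam' k - μ k)
        = p (k, y) * (-η * ((μ k - lam' k) * C k y.1 y.2 / η)) := by rw [hc]; ring
      _ = -η * (p (k, y) * s (k, y)) := by simp only [hsdef]; ring
  have hgrad : ∑ k, gradLam η C f g μ k * (lam' k - μ k) = -η * ∑ x, p x * s x := by
    rw [Fintype.sum_prod_type, Finset.mul_sum]
    exact Finset.sum_congr rfl fun k _ => hgradk k
  -- Fdual difference
  have hdiff : Fdual η C a b f g lam' - Fdual η C a b f g μ =
      -η * Real.log (∑ x, p x * Real.exp (s x)) := by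
    rw [hratio, Fdual, Fdual, hSnorm, hSnorm, Real.log_div (hSpos lam').ne' (hSpos μ).ne']
    ring
  obtain ⟨hjen, hhoef⟩ := lse_core p s hp hp1 hs
  have hM2 : η * (M ^ 2 / 2) = cinf C ^ 2 / (2 * η) * ∑ k, (lam' k - μ k) ^ 2 := by
    rw [hMdef]
    rw [div_pow, mul_pow, Real.sq_sqrt (Finset.sum_nonneg fun k _ => sq_nonneg _)]
    field_simp
  constructor
  · have h1 : -η * Real.log (∑ x, p x * Real.exp (s x)) ≤ -η * ∑ x, p x * s x := by
      apply mul_le_mul_of_nonpos_left hjen (by linarith)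
    rw [← hgrad] at h1
    linarith [hdiff]
  · have h2 : -η * (∑ x, p x * s x) - η * (M ^ 2 / 2) ≤
        -η * Real.log (∑ x, p x * Real.exp (s x)) := by
      have := mul_le_mul_of_nonpos_left hhoef (neg_nonpos_of_nonneg hη.le)
      calc -η * (∑ x, p x * s x) - η * (M ^ 2 / 2)
          = -η * ((∑ x, p x * s x) + M ^ 2 / 2) := by ring
        _ ≤ -η * Real.log (∑ x, p x * Real.exp (s x)) := this
    rw [← hgrad, hM2] at h2
    linarith [hdiff]


lemma proj_contract {m : ℕ} {pY x q : Fin m → ℝ} (h : IsProjSimplex pY x)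
    (hq : q ∈ stdSimplex ℝ (Fin m)) :
    ∑ k, (pY k - q k) ^ 2 ≤ ∑ k, (x k - q k) ^ 2 := by
  have hvi := proj_vi h hq
  set A := ∑ k, (pY k - q k) ^ 2 with hA
  set B := ∑ k, (x k - q k) ^ 2 with hB
  set D := ∑ k, (x k - q k) * (pY k - q k) with hD
  have hA0 : 0 ≤ A := Finset.sum_nonneg fun k _ => sq_nonneg _
  have hB0 : 0 ≤ B := Finset.sum_nonneg fun k _ => sq_nonneg _
  have hsum : A ≤ D := by
    have e : (∑ k, (x k - pY k) * (q k - pY k)) + D = A := by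
      rw [hD, hA, ← Finset.sum_add_distrib]
      exact Finset.sum_congr rfl fun k _ => by ring
    linarith
  have hcs : D ^ 2 ≤ B * A := by
    have := Finset.sum_mul_sq_le_sq_mul_sq Finset.univ
      (fun k => x k - q k) (fun k => pY k - q k)
    simpa [hD, hA, hB] using this
  rcases eq_or_lt_of_le hA0 with hAz | hApos
  · linarith
  · have hD0 : 0 ≤ D := le_trans hA0 hsum
    have h1 : A ^ 2 ≤ D ^ 2 := by nlinarith
    have h2 : A * A ≤ B * A := by nlinarith
    exact le_of_mul_le_mul_right h2 hApos

/-- sufficient increase of the Hamiltonian in λ along PAME. -/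
theorem pame_hamiltonian_increase
    {n N : ℕ} (hn : 0 < n) (hN : 0 < N)
    (C : Fin N → Mat n) (a b : Fin n → ℝ)
    (ha : a ∈ stdSimplex ℝ (Fin n)) (hb : b ∈ stdSimplex ℝ (Fin n))
    (ha' : ∀ i, 0 < a i) (hb' : ∀ j, 0 < b j)
    (η : ℝ) (hη : 0 < η) (hc : 0 < cinf C)
    (θ : ℝ) (hθ0 : 0 < θ) (hθ1 : θ < 1)
    (τ : ℝ) (hτ : τ = η / (2 * cinf C ^ 2))
    (f g : ℕ → Fin n → ℝ) (lam y : ℕ → Fin N → ℝ)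
    (hf0 : f 0 = fun _ => 1) (hg0 : g 0 = fun _ => 1)
    (hlam0 : lam 0 = fun _ => (N : ℝ)⁻¹)
    (hfstep : ∀ t, f (t + 1) = fun i =>
      f t i + η * Real.log (a i / rowSum (∑ k, zeta η C (f t) (g t) (lam t) k) i))
    (hgstep : ∀ t, g (t + 1) = fun j =>
      g t j + η * Real.log (b j / colSum (∑ k, zeta η C (f (t + 1)) (g t) (lam t) k) j))
    (hystep : ∀ t, IsProjSimplex (y (t + 1))
      (fun k => lam t k + (1 - θ) * (lam t k - lam (t - 1) k)))
    (hlamstep : ∀ t, IsProjSimplex (lam (t + 1))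
      (fun k => y (t + 1) k + τ * gradLam η C (f (t + 1)) (g (t + 1)) (y (t + 1)) k)) :
    ∀ t : ℕ,
      (2 * θ - θ ^ 2) / (2 * τ) * vnorm2 (fun k => lam t k - lam (t - 1) k) ^ 2
          + 1 / (4 * τ) * vnorm2 (fun k => lam (t + 1) k - y (t + 1) k) ^ 2
        ≤ ham η C a b τ (f (t + 1)) (g (t + 1)) (lam (t + 1)) (lam t)
          - ham η C a b τ (f (t + 1)) (g (t + 1)) (lam t) (lam (t - 1)) ∧
      0 ≤ (2 * θ - θ ^ 2) / (2 * τ) * vnorm2 (fun k => lam t k - lam (t - 1) k) ^ 2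
          + 1 / (4 * τ) * vnorm2 (fun k => lam (t + 1) k - y (t + 1) k) ^ 2 := by
  intro t
  -- basic facts
  have hτpos : 0 < τ := by rw [hτ]; positivity
  have hlamΔ : ∀ u, lam u ∈ stdSimplex ℝ (Fin N) := by
    intro u
    cases u with
    | zero =>
      rw [hlam0]
      constructor
      · intro k; positivity
      · simp only [Finset.sum_const, Finset.card_univ, Fintype.card_fin, nsmul_eq_mul]
        field_simp
    | succ u => exact (hlamstep u).1
  set Gv : Fin N → ℝ := gradLam η C (f (t + 1)) (g (t + 1)) (y (t + 1)) with hGv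
  set P : ℝ := ∑ k, (lam t k - lam (t - 1) k) ^ 2 with hP
  set A : ℝ := ∑ k, (lam (t + 1) k - lam t k) ^ 2 with hA
  set Q : ℝ := ∑ k, (lam (t + 1) k - y (t + 1) k) ^ 2 with hQ
  set W : ℝ := ∑ k, (y (t + 1) k - lam t k) ^ 2 with hW
  set DG1 : ℝ := ∑ k, Gv k * (lam t k - y (t + 1) k) with hDG1
  set DG2 : ℝ := ∑ k, Gv k * (lam (t + 1) k - y (t + 1) k) with hDG2
  set IP : ℝ := ∑ k, (y (t + 1) k - lam (t + 1) k) * (lam t k - lam (t + 1) k) with hIP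
  have hP0 : 0 ≤ P := Finset.sum_nonneg fun k _ => sq_nonneg _
  have hQ0 : 0 ≤ Q := Finset.sum_nonneg fun k _ => sq_nonneg _
  -- concavity and smoothness at y (t+1)
  have hconc := (fdual_bounds hn hN C a b hη (f (t + 1)) (g (t + 1)) (y (t + 1)) (lam t)).1
  have hsmo := (fdual_bounds hn hN C a b hη (f (t + 1)) (g (t + 1)) (y (t + 1)) (lam (t + 1))).2
  rw [← hGv, ← hDG1] at hconc
  rw [← hGv, ← hDG2, ← hQ] at hsmo
  -- projection variational inequality for lam (t+1)
  have hvi := proj_vi (hlamstep t) (hlamΔ t)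
  have hsplit : ∑ k, (y (t + 1) k + τ * Gv k - lam (t + 1) k) * (lam t k - lam (t + 1) k)
      = IP + τ * (DG1 - DG2) := by
    rw [hIP, hDG1, hDG2, ← Finset.sum_sub_distrib, Finset.mul_sum, ← Finset.sum_add_distrib]
    exact Finset.sum_congr rfl fun k _ => by ring
  rw [hsplit] at hvi
  -- parallelogram-type identity
  have hiden : IP = (Q + A - W) / 2 := by
    rw [hIP, hQ, hA, hW, ← Finset.sum_add_distrib, ← Finset.sum_sub_distrib, Finset.sum_div]
    exact Finset.sum_congr rfl fun k _ => by ring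
  -- nonexpansiveness of projection for y (t+1)
  have hwb : W ≤ (1 - θ) ^ 2 * P := by
    have hc := proj_contract (hystep t) (hlamΔ t)
    have he : ∑ k, ((lam t k + (1 - θ) * (lam t k - lam (t - 1) k)) - lam t k) ^ 2
        = (1 - θ) ^ 2 * P := by
      rw [hP, Finset.mul_sum]
      exact Finset.sum_congr rfl fun k _ => by ring
    rw [he] at hc
    exact hc
  -- smoothness constant
  have hc2 : cinf C ^ 2 / (2 * η) = 1 / (4 * τ) := by
    rw [hτ]
    field_simp
    ring
  rw [hc2] at hsmo
  -- key inequality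
  have hDG : DG1 - DG2 ≤ -IP / τ := by
    rw [le_div_iff₀ hτpos]
    linarith [hvi]
  have hkey : Fdual η C a b (f (t + 1)) (g (t + 1)) (lam (t + 1))
      - Fdual η C a b (f (t + 1)) (g (t + 1)) (lam t)
      ≥ 1 / (2 * τ) * Q + 1 / (2 * τ) * A - 1 / (2 * τ) * W - 1 / (4 * τ) * Q := by
    have h1 : DG2 - DG1 ≥ IP / τ := by linarith [hDG, neg_div τ IP]
    have h2 : IP / τ = 1 / (2 * τ) * Q + 1 / (2 * τ) * A - 1 / (2 * τ) * W := by
      rw [hiden]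
      field_simp
    linarith [hconc, hsmo]
  -- assemble
  have hWmul : 1 / (2 * τ) * W ≤ 1 / (2 * τ) * ((1 - θ) ^ 2 * P) :=
    mul_le_mul_of_nonneg_left hwb (by positivity)
  have hring : (2 * θ - θ ^ 2) / (2 * τ) * P + 1 / (2 * τ) * ((1 - θ) ^ 2 * P)
      = 1 / (2 * τ) * P := by field_simp; ring
  have hQlink : 1 / (2 * τ) * Q = 2 * (1 / (4 * τ) * Q) := by
    field_simp
    ring
  have hQpos : (0:ℝ) ≤ 1 / (4 * τ) * Q := by positivity
  have hPpos : (0:ℝ) ≤ (2 * θ - θ ^ 2) / (2 * τ) * P := by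
    apply mul_nonneg _ hP0
    apply div_nonneg _ (by positivity)
    have hmul : 0 ≤ θ * (2 - θ) := mul_nonneg hθ0.le (by linarith)
    linarith [hmul]
  have hv1 : vnorm2 (fun k => lam t k - lam (t - 1) k) ^ 2 = P := by
    simp only [vnorm2_sq]
    rfl
  have hv2 : vnorm2 (fun k => lam (t + 1) k - y (t + 1) k) ^ 2 = Q := by
    simp only [vnorm2_sq]
    rfl
  have hv3 : vnorm2 (fun k => lam (t + 1) k - lam t k) ^ 2 = A := by
    simp only [vnorm2_sq]
    rfl
  constructor
  · simp only [ham]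
    rw [hv1, hv2, hv3]
    linarith [hkey, hWmul, hring, hQlink]
  · rw [hv1, hv2]
    linarith [hQpos, hPpos]


end EOT

end
end

section
/- Let π^1,…,π^N ∈ ℝ^{n×n} be entrywise nonnegative matrices and let b ∈ ℝ^n with b_j > 0 for all j and Σ_{j=1}^n b_j = Σ_{k=1}^N Σ_{i,j} π^k_{ij}. Set a^k := r(π^k) for each k. Then there exist vectors b^1,…,b^N ∈ ℝ^n satisfying: (i) b^k_j ≥ 0 for all k, j; (ii) Σ_{k=1}^N b^k = b; (iii) Σ_{j=1}^n b^k_j = Σ_{i=1}^n a^k_i for every k; (iv) for every fixed j and all k, k', (b^k_j − c(π^k)_j)(b^{k'}_j − c(π^{k'})_j) ≥ 0. Moreover, properties (ii) and (iv) imply Σ_{k=1}^N ‖b^k − c(π^k)‖_1 = ‖b − c(Σ_{k=1}^N π^k)‖_1. -/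
open scoped BigOperators

noncomputable section

namespace EOT

/-- existence of margins b^1, …, b^N with the four properties,
and the resulting ℓ₁ identity. -/
theorem margins_exist
    {n N : ℕ} (hn : 0 < n) (hN : 0 < N)
    (P : Fin N → Mat n) (hP : ∀ k i j, 0 ≤ P k i j)
    (b : Fin n → ℝ) (hb : ∀ j, 0 < b j)
    (hsum : ∑ j, b j = ∑ k, ∑ i, ∑ j, P k i j)
    (ak : Fin N → Fin n → ℝ) (hak : ∀ k, ak k = rowSum (P k)) :
    (∃ bk : Fin N → Fin n → ℝ,
      (∀ k j, 0 ≤ bk k j) ∧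
      (∀ j, ∑ k, bk k j = b j) ∧
      (∀ k, ∑ j, bk k j = ∑ i, ak k i) ∧
      (∀ j k k', 0 ≤ (bk k j - colSum (P k) j) * (bk k' j - colSum (P k') j))) ∧
    (∀ bk : Fin N → Fin n → ℝ,
      (∀ j, ∑ k, bk k j = b j) →
      (∀ j k k', 0 ≤ (bk k j - colSum (P k) j) * (bk k' j - colSum (P k') j)) →
      (∑ k, vnorm1 (fun j => bk k j - colSum (P k) j))
        = vnorm1 (fun j => b j - colSum (∑ k, P k) j)) := by
  classical
  set c : Fin N → Fin n → ℝ := fun k => colSum (P k) with hc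
  set cA : Fin n → ℝ := fun j => ∑ k, c k j with hcA
  have hcnn : ∀ k j, 0 ≤ c k j := fun k j => Finset.sum_nonneg fun i _ => hP k i j
  have hcAnn : ∀ j, 0 ≤ cA j := fun j => Finset.sum_nonneg fun k _ => hcnn k j
  set e : Fin n → ℝ := fun j => b j - cA j with he
  have hcAk : ∀ j, (∑ k, c k j) = cA j := fun j => rfl
  have hcolA : ∀ j, colSum (∑ k, P k) j = cA j := by
    intro j
    simp only [hcA, hc, colSum, Finset.sum_apply]
    rw [Finset.sum_comm]
  have hcAsum : ∑ j, cA j = ∑ k, ∑ i, ∑ j, P k i j := by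
    simp only [hcA, hc, colSum]
    rw [Finset.sum_comm]
    refine Finset.sum_congr rfl fun k _ => ?_
    rw [Finset.sum_comm]
  have hesum : ∑ j, e j = 0 := by
    simp only [he, Finset.sum_sub_distrib, hsum, hcAsum, sub_self]
  have hcApos : ∀ j, e j < 0 → 0 < cA j := by
    intro j hj
    have := hb j
    simp only [he] at hj
    linarith
  set T : ℝ := ∑ j, -min (e j) 0 with hT
  have hTnn : 0 ≤ T :=
    Finset.sum_nonneg fun j _ => by
      have := min_le_right (e j) 0; linarith
  have hTmax : T = ∑ j, max (e j) 0 := by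
    have h1 : ∑ j, (max (e j) 0 - (-min (e j) 0)) = 0 := by
      have heq : ∀ j, max (e j) 0 - (-min (e j) 0) = e j := fun j => by
        have := max_add_min (e j) 0
        linarith
      simp only [heq]; exact hesum
    rw [Finset.sum_sub_distrib] at h1
    linarith
  set m : Fin N → ℝ := fun k => ∑ j, if e j < 0 then -(e j) * c k j / cA j else 0
    with hm
  have hmnn : ∀ k, 0 ≤ m k := by
    intro k
    refine Finset.sum_nonneg fun j _ => ?_
    split_ifs with hj
    · exact div_nonneg (mul_nonneg (by linarith) (hcnn k j)) (hcApos j hj).le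
    · exact le_rfl
  have hmsum : ∑ k, m k = T := by
    simp only [hm]
    rw [Finset.sum_comm, hT]
    refine Finset.sum_congr rfl fun j _ => ?_
    split_ifs with hj
    · have hA := (hcApos j hj).ne'
      have hstep : ∑ k, (-(e j) * c k j / cA j) = -(e j) * (∑ k, c k j) / cA j := by
        rw [Finset.mul_sum, Finset.sum_div]
      rw [hstep, hcAk, min_eq_left hj.le, mul_div_assoc, div_self hA, mul_one]
    · simp [min_eq_right (not_lt.mp hj)]
  set d : Fin N → Fin n → ℝ :=
    fun k j => if e j < 0 then e j * c k j / cA j else m k * e j / T with hd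
  have hdcol : ∀ j, ∑ k, d k j = e j := by
    intro j
    simp only [hd]
    split_ifs with hj
    · have hA := (hcApos j hj).ne'
      have hstep : ∑ k, (e j * c k j / cA j) = e j * (∑ k, c k j) / cA j := by
        rw [Finset.mul_sum, Finset.sum_div]
      rw [hstep, hcAk, mul_div_assoc, div_self hA, mul_one]
    · rcases lt_or_eq_of_le (not_lt.mp hj) with hpos | heq
      · have hTpos : 0 < T := by
          rw [hTmax]
          calc (0:ℝ) < e j := hpos
          _ = max (e j) 0 := (max_eq_left hpos.le).symm
          _ ≤ ∑ j', max (e j') 0 := Finset.single_le_sum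
              (f := fun j' => max (e j') 0)
              (fun j' _ => le_max_right _ _) (Finset.mem_univ j)
        rw [← Finset.sum_div, ← Finset.sum_mul, hmsum, mul_comm, mul_div_assoc,
          div_self hTpos.ne', mul_one]
      · simp [← heq]
  have hdrow : ∀ k, ∑ j, d k j = 0 := by
    intro k
    have hsplit : ∀ j, d k j =
        (if e j < 0 then e j * c k j / cA j else 0)
          + (if e j < 0 then 0 else m k * e j / T) := by
      intro j; simp only [hd]; split_ifs <;> ring
    simp only [hsplit, Finset.sum_add_distrib]
    have h1 : ∑ j, (if e j < 0 then e j * c k j / cA j else 0) = -m k := by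
      rw [hm, ← Finset.sum_neg_distrib]
      refine Finset.sum_congr rfl fun j _ => ?_
      split_ifs <;> ring
    have h2 : ∑ j, (if e j < 0 then 0 else m k * e j / T) = m k * T / T := by
      have heq2 : ∀ j, (if e j < 0 then (0:ℝ) else m k * e j / T)
          = m k * max (e j) 0 / T := by
        intro j
        split_ifs with hj
        · rw [max_eq_right (le_of_lt hj)]; simp
        · rw [max_eq_left (not_lt.mp hj)]
      simp only [heq2]
      rw [← Finset.sum_div, ← Finset.mul_sum, ← hTmax]
    rw [h1, h2]
    by_cases hT0 : T = 0
    · have hm0 : m k = 0 := by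
        have h := hmsum
        rw [hT0] at h
        have hle := Finset.single_le_sum (fun k' (_ : k' ∈ Finset.univ) => hmnn k')
          (Finset.mem_univ k)
        rw [h] at hle
        linarith [hmnn k]
      simp [hm0]
    · rw [mul_div_assoc, div_self hT0, mul_one, neg_add_cancel]
  have hdsign : ∀ j k k', 0 ≤ d k j * d k' j := by
    intro j k k'
    by_cases hj : e j < 0
    · have h : ∀ k₀, d k₀ j ≤ 0 := by
        intro k₀
        simp only [hd, if_pos hj]
        have h1 : e j * c k₀ j ≤ 0 :=
          mul_nonpos_of_nonpos_of_nonneg hj.le (hcnn k₀ j)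
        exact div_nonpos_of_nonpos_of_nonneg h1 (hcApos j hj).le
      nlinarith [h k, h k']
    · have h : ∀ k₀, 0 ≤ d k₀ j := by
        intro k₀
        simp only [hd, if_neg hj]
        exact div_nonneg (mul_nonneg (hmnn k₀) (not_lt.mp hj)) hTnn
      exact mul_nonneg (h k) (h k')
  -- key abs-sum lemma
  have habs : ∀ (x : Fin N → ℝ), (∀ k k', 0 ≤ x k * x k') →
      ∑ k, |x k| = |∑ k, x k| := by
    intro x hx
    by_cases hpos : ∀ k, 0 ≤ x k
    · rw [abs_of_nonneg (Finset.sum_nonneg fun k _ => hpos k)]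
      exact Finset.sum_congr rfl fun k _ => abs_of_nonneg (hpos k)
    · push_neg at hpos
      obtain ⟨k0, hk0⟩ := hpos
      have hneg : ∀ k, x k ≤ 0 := by
        intro k
        by_contra hk
        push_neg at hk
        have := hx k k0
        nlinarith
      rw [abs_of_nonpos (Finset.sum_nonpos fun k _ => hneg k),
        ← Finset.sum_neg_distrib]
      exact Finset.sum_congr rfl fun k _ => abs_of_nonpos (hneg k)
  constructor
  · refine ⟨fun k j => c k j + d k j, ?_, ?_, ?_, ?_⟩
    · intro k j
      show 0 ≤ c k j + d k j
      by_cases hj : e j < 0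
      · have hA := hcApos j hj
        have hck := hcnn k j
        have heq : c k j + d k j = c k j * b j / cA j := by
          simp only [hd, if_pos hj]
          simp only [he]
          field_simp
          ring
        rw [heq]
        exact div_nonneg (mul_nonneg hck (hb j).le) hA.le
      · have h1 : 0 ≤ d k j := by
          simp only [hd, if_neg hj]
          exact div_nonneg (mul_nonneg (hmnn k) (not_lt.mp hj)) hTnn
        have := hcnn k j
        linarith
    · intro j
      show ∑ k, (c k j + d k j) = b j
      rw [Finset.sum_add_distrib, hdcol, hcAk]
      simp [he]
    · intro k
      show ∑ j, (c k j + d k j) = ∑ i, ak k i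
      rw [Finset.sum_add_distrib, hdrow, add_zero, hak]
      simp only [hc, colSum, rowSum]
      rw [Finset.sum_comm]
    · intro j k k'
      show 0 ≤ (c k j + d k j - colSum (P k) j) * (c k' j + d k' j - colSum (P k') j)
      have h1 : ∀ k₀, c k₀ j + d k₀ j - colSum (P k₀) j = d k₀ j := by
        intro k₀; simp [hc]
      rw [h1 k, h1 k']
      exact hdsign j k k'
  · intro bk hcol hsig
    have hstep : ∀ j, ∑ k, |bk k j - colSum (P k) j| = |b j - cA j| := by
      intro j
      rw [habs (fun k => bk k j - colSum (P k) j) (fun k k' => hsig j k k')]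
      congr 1
      rw [Finset.sum_sub_distrib, hcol j]
    simp only [vnorm1, hcolA]
    rw [Finset.sum_comm]
    exact Finset.sum_congr rfl fun j _ => hstep j

end EOT

end
end
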